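/- For every positive integer k, P(Poisson(k) ≥ k) ≥ P(Poisson(k+1) ≥ k+1). -/

import Mathlib

open ProbabilityTheory
open scoped NNReal

open Real Finset Nat in
/-- The function `x ↦ x^k e^{-x}` attains its max over `[0,∞)` at `x = k`. -/
lemma aux_max_pois (k : ℕ) (hk : 0 < k) {c : ℝ} (hc : 0 ≤ c) :
    Real.exp (-c) * c ^ k ≤ Real.exp (-(k : ℝ)) * (k : ℝ) ^ k := by
  have hkpos : (0 : ℝ) < (k : ℝ) := by exact_mod_cast hk
  have h1 : c / k ≤ Real.exp (c / k - 1) := by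
    have := Real.add_one_le_exp (c / k - 1)
    linarith
  have h2 : (c / k) ^ k ≤ Real.exp (c / k - 1) ^ k :=
    pow_le_pow_left₀ (by positivity) h1 k
  have h3 : Real.exp (c / k - 1) ^ k = Real.exp (c - k) := by
    rw [← Real.exp_nat_mul]
    congr 1
    field_simp
  rw [h3, div_pow] at h2
  have h4 : c ^ k ≤ Real.exp (c - (k : ℝ)) * (k : ℝ) ^ k := by
    rw [div_le_iff₀ (by positivity)] at h2
    linarith
  have h5 : Real.exp (-c) * c ^ k ≤ Real.exp (-c) * (Real.exp (c - k) * (k:ℝ) ^ k) :=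
    mul_le_mul_of_nonneg_left h4 (Real.exp_nonneg _)
  calc Real.exp (-c) * c ^ k ≤ Real.exp (-c) * (Real.exp (c - k) * (k:ℝ) ^ k) := h5
    _ = Real.exp (-(k:ℝ)) * (k:ℝ) ^ k := by
        rw [← mul_assoc, ← Real.exp_add]; ring_nf

open Real Finset Nat in
/-- Derivative of the Poisson CDF in the rate parameter. -/
lemma aux_hasDerivAt (k : ℕ) (x : ℝ) :
    HasDerivAt (fun t : ℝ => ∑ j ∈ range (k + 1), Real.exp (-t) * t ^ j / (j ! : ℝ))
      (-(Real.exp (-x) * x ^ k / (k ! : ℝ))) x := by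
  have key : ∀ j : ℕ, HasDerivAt (fun t : ℝ => Real.exp (-t) * t ^ j / (j ! : ℝ))
      ((fun i : ℕ => if i = 0 then 0 else -(Real.exp (-x) * x ^ (i - 1) / ((i - 1)! : ℝ))) (j + 1)
        - (fun i : ℕ => if i = 0 then 0 else -(Real.exp (-x) * x ^ (i - 1) / ((i - 1)! : ℝ))) j) x := by
    intro j
    have he : HasDerivAt (fun t : ℝ => Real.exp (-t)) (-Real.exp (-x)) x := by
      simpa [Function.comp_def] using (Real.hasDerivAt_exp (-x)).comp x (hasDerivAt_neg x)
    have hp : HasDerivAt (fun t : ℝ => t ^ j) ((j : ℝ) * x ^ (j - 1)) x := hasDerivAt_pow j x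
    have hm := (he.mul hp).div_const ((j ! : ℝ))
    cases j with
    | zero => simpa using hm
    | succ n =>
      refine hm.congr_deriv ?_
      simp only [Nat.succ_ne_zero, if_false, Nat.add_sub_cancel]
      push_cast [Nat.factorial_succ]
      field_simp
      ring
  have hsum := HasDerivAt.fun_sum (fun j (_ : j ∈ range (k + 1)) => key j)
  rw [Finset.sum_range_sub (fun i : ℕ =>
      if i = 0 then 0 else -(Real.exp (-x) * x ^ (i - 1) / ((i - 1)! : ℝ)))] at hsum
  simpa using hsum

open Real Finset Nat in
/-- The key real inequality: the Poisson CDF at the mean is monotone in the rate. -/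
lemma aux_real_ineq (k : ℕ) (hk : 0 < k) :
    ∑ j ∈ range k, Real.exp (-(k : ℝ)) * (k : ℝ) ^ j / (j ! : ℝ)
      ≤ ∑ j ∈ range (k + 1), Real.exp (-((k : ℝ) + 1)) * ((k : ℝ) + 1) ^ j / (j ! : ℝ) := by
  set g : ℝ → ℝ := fun t => ∑ j ∈ range (k + 1), Real.exp (-t) * t ^ j / (j ! : ℝ) with hg
  -- MVT on [k, k+1]
  have hlt : (k : ℝ) < (k : ℝ) + 1 := by linarith
  obtain ⟨c, hc, hceq⟩ := exists_hasDerivAt_eq_slope g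
      (fun x => -(Real.exp (-x) * x ^ k / (k ! : ℝ))) hlt
      (fun x _ => (aux_hasDerivAt k x).continuousAt.continuousWithinAt)
      (fun x _ => aux_hasDerivAt k x)
  have hc0 : (0 : ℝ) ≤ c := le_of_lt (lt_of_le_of_lt (Nat.cast_nonneg k) hc.1)
  have hslope : g ((k : ℝ) + 1) - g (k : ℝ) = -(Real.exp (-c) * c ^ k / (k ! : ℝ)) := by
    rw [hceq]; field_simp; ring
  have hmax : Real.exp (-c) * c ^ k / (k ! : ℝ) ≤ Real.exp (-(k : ℝ)) * (k : ℝ) ^ k / (k ! : ℝ) :=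
    div_le_div_of_nonneg_right (aux_max_pois k hk hc0) (by positivity) |>.trans_eq rfl
  have hsplit : g (k : ℝ) = (∑ j ∈ range k, Real.exp (-(k : ℝ)) * (k : ℝ) ^ j / (j ! : ℝ))
      + Real.exp (-(k : ℝ)) * (k : ℝ) ^ k / (k ! : ℝ) := by
    rw [hg]; exact Finset.sum_range_succ _ k
  have : g (k : ℝ) - g ((k : ℝ) + 1) ≤ Real.exp (-(k : ℝ)) * (k : ℝ) ^ k / (k ! : ℝ) := by
    rw [show g (k:ℝ) - g ((k:ℝ)+1) = -(g ((k:ℝ)+1) - g (k:ℝ)) by ring, hslope]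
    simpa using hmax
  have : g (k : ℝ) - Real.exp (-(k : ℝ)) * (k : ℝ) ^ k / (k ! : ℝ) ≤ g ((k : ℝ) + 1) := by linarith
  calc ∑ j ∈ range k, Real.exp (-(k : ℝ)) * (k : ℝ) ^ j / (j ! : ℝ)
      = g (k : ℝ) - Real.exp (-(k : ℝ)) * (k : ℝ) ^ k / (k ! : ℝ) := by rw [hsplit]; ring
    _ ≤ g ((k : ℝ) + 1) := this

open Real Finset Nat in
/-- Tail of the Poisson measure as `1 - ofReal (partial sum)`. -/
lemma aux_tail (r : ℝ≥0) (m : ℕ) :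
    poissonMeasure r {n : ℕ | m ≤ n}
      = 1 - ENNReal.ofReal (∑ j ∈ range m, Real.exp (-(r : ℝ)) * (r : ℝ) ^ j / (j ! : ℝ)) := by
  have hset : {n : ℕ | m ≤ n} = (↑(Finset.range m) : Set ℕ)ᶜ := by
    ext n; simp [Nat.lt_iff_add_one_le, not_lt]
  have hprob : MeasureTheory.IsProbabilityMeasure (poissonMeasure r) := inferInstance
  rw [hset, MeasureTheory.measure_compl (by measurability) (MeasureTheory.measure_ne_top _ _), MeasureTheory.measure_univ]
  congr 1
  rw [← MeasureTheory.sum_measure_singleton]; simp only [poissonMeasure_singleton]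
  rw [eq_comm, ENNReal.ofReal_sum_of_nonneg]
  · intro j _; positivity

theorem stmt16 (k : ℕ) (hk : 0 < k) :
    poissonMeasure ((k : ℝ≥0) + 1) {n : ℕ | k + 1 ≤ n}
      ≤ poissonMeasure (k : ℝ≥0) {n : ℕ | k ≤ n} := by
  rw [aux_tail, aux_tail]
  apply tsub_le_tsub_left
  apply ENNReal.ofReal_le_ofReal
  have := aux_real_ineq k hk
  convert this using 2
  all_goals push_cast; rfl
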